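/- Let f, g, h : ℕ → ℂ be sequences such that f_k ≠ 0 and h_k ≠ 0 for every k, and f_k = o(g_k) and h_k = o(g_k) as k → ∞ (i.e. f_k/g_k → 0 and h_k/g_k → 0, where g_k ≠ 0 for all sufficiently large k). Then there exists a sequence (a_k)_{k≥0} of complex numbers, not identically zero, satisfying the three-term recurrence f_k a_{k−1} + g_k a_k + h_k a_{k+1} = 0 for every k ≥ 1, such that the power series ∑_{k≥0} a_k z^k has infinite radius of convergence; and it is unique up to a constant factor: any sequence (a'_k)_{k≥0} satisfying the same recurrence for every k ≥ 1 and such that ∑_{k≥0} a'_k z^k has positive (possibly infinite) radius of convergence is of the form a'_k = c·a_k for some constant c ∈ ℂ. -/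

import Mathlib

open Filter Topology
open BoundedContinuousFunction

lemma exists_tail_solution (f g h : ℕ → ℂ) (N : ℕ)
    (hb : ∀ k, N + 1 ≤ k → ‖f k / g k‖ ≤ 8⁻¹ ∧ ‖h k / g k‖ ≤ 8⁻¹) :
    ∃ (u : ℕ → ℂ) (M : ℝ), u N = 1 ∧ (∀ k, ‖u k‖ ≤ M) ∧
      ∀ k, N + 1 ≤ k → u k = -(f k / g k) * u (k - 1) - (h k / g k) * u (k + 1) := by
  set T : (ℕ →ᵇ ℂ) → (ℕ →ᵇ ℂ) := fun u =>
    ofNormedAddCommGroup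
      (fun k => if k ≤ N then 1 else -(f k / g k) * u (k - 1) - (h k / g k) * u (k + 1))
      (continuous_of_discreteTopology) (1 + ‖u‖ / 4) (by
        intro k
        by_cases hk : k ≤ N
        · simp only [hk, if_true, norm_one]
          have := norm_nonneg u; linarith
        · simp only [hk, if_false]
          push_neg at hk
          obtain ⟨h1, h2⟩ := hb k hk
          have b1 : ‖u (k - 1)‖ ≤ ‖u‖ := u.norm_coe_le_norm _
          have b2 : ‖u (k + 1)‖ ≤ ‖u‖ := u.norm_coe_le_norm _
          calc ‖-(f k / g k) * u (k - 1) - (h k / g k) * u (k + 1)‖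
              ≤ ‖-(f k / g k) * u (k - 1)‖ + ‖(h k / g k) * u (k + 1)‖ := norm_sub_le _ _
            _ ≤ 8⁻¹ * ‖u‖ + 8⁻¹ * ‖u‖ := by
                rw [norm_mul, norm_mul, norm_neg]
                gcongr <;> first | exact h1 | exact h2
            _ ≤ 1 + ‖u‖ / 4 := by have := norm_nonneg u; linarith)
  have hT : ContractingWith (1/2 : NNReal) T := by
    constructor
    · rw [← NNReal.coe_lt_coe]; norm_num
    · apply LipschitzWith.of_dist_le_mul
      intro u v
      have hc : ((1/2 : NNReal) : ℝ) = 1/2 := by norm_num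
      rw [hc]
      rw [dist_le (by positivity)]
      intro k
      by_cases hk : k ≤ N
      · simp only [T, coe_ofNormedAddCommGroup]
        simp only [hk, if_true, dist_self]
        positivity
      · simp only [T, coe_ofNormedAddCommGroup]
        simp only [hk, if_false]
        push_neg at hk
        obtain ⟨h1, h2⟩ := hb k hk
        rw [dist_eq_norm]
        have b1 : ‖u (k - 1) - v (k - 1)‖ ≤ dist u v := by
          rw [← dist_eq_norm]; exact dist_coe_le_dist _
        have b2 : ‖u (k + 1) - v (k + 1)‖ ≤ dist u v := by
          rw [← dist_eq_norm]; exact dist_coe_le_dist _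
        have key : (-(f k / g k) * u (k - 1) - (h k / g k) * u (k + 1)) -
            (-(f k / g k) * v (k - 1) - (h k / g k) * v (k + 1)) =
            -(f k / g k) * (u (k - 1) - v (k - 1)) - (h k / g k) * (u (k + 1) - v (k + 1)) := by
          ring
        rw [key]
        calc ‖-(f k / g k) * (u (k - 1) - v (k - 1)) - (h k / g k) * (u (k + 1) - v (k + 1))‖
            ≤ ‖-(f k / g k) * (u (k - 1) - v (k - 1))‖ + ‖(h k / g k) * (u (k + 1) - v (k + 1))‖ :=
              norm_sub_le _ _
          _ ≤ 8⁻¹ * dist u v + 8⁻¹ * dist u v := by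
              rw [norm_mul, norm_mul, norm_neg]
              gcongr <;> first | exact h1 | exact h2
          _ ≤ 1/2 * dist u v := by have := dist_nonneg (x := u) (y := v); linarith
  obtain u := hT.fixedPoint T
  have hfix : T (hT.fixedPoint T) = hT.fixedPoint T := hT.fixedPoint_isFixedPt
  set w := hT.fixedPoint T with hw
  have hpt : ∀ k, (if k ≤ N then 1 else
      -(f k / g k) * w (k - 1) - (h k / g k) * w (k + 1)) = w k := by
    intro k
    conv_rhs => rw [← hfix]
    simp only [T, coe_ofNormedAddCommGroup]
  refine ⟨fun k => w k, ‖w‖, ?_, fun k => w.norm_coe_le_norm k, ?_⟩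
  · have := hpt N; simpa using this.symm
  · intro k hk
    have := hpt k
    rw [if_neg (by omega)] at this
    exact this.symm

private noncomputable def backExt (f g h u : ℕ → ℂ) (N : ℕ) : ℕ → ℂ × ℂ
  | 0 => (u N, u (N + 1))
  | j + 1 =>
    ((-(g (N - j) * (backExt f g h u N j).1 + h (N - j) * (backExt f g h u N j).2)) / f (N - j),
      (backExt f g h u N j).1)

private lemma backExt_zero (f g h u : ℕ → ℂ) (N : ℕ) :
    backExt f g h u N 0 = (u N, u (N + 1)) := rfl

private lemma backExt_succ (f g h u : ℕ → ℂ) (N j : ℕ) :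
    backExt f g h u N (j + 1) =
      ((-(g (N - j) * (backExt f g h u N j).1 + h (N - j) * (backExt f g h u N j).2)) / f (N - j),
        (backExt f g h u N j).1) := rfl

private lemma full_solution (f g h : ℕ → ℂ) (N : ℕ) (u : ℕ → ℂ)
    (hf : ∀ k, f k ≠ 0) (hgN : ∀ k, N + 1 ≤ k → g k ≠ 0)
    (hu : ∀ k, N + 1 ≤ k → u k = -(f k / g k) * u (k - 1) - (h k / g k) * u (k + 1)) :
    ∃ A : ℕ → ℂ, (∀ k, N ≤ k → A k = u k) ∧
      ∀ k : ℕ, f (k + 1) * A k + g (k + 1) * A (k + 1) + h (k + 1) * A (k + 2) = 0 := by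
  set B := backExt f g h u N with hB
  refine ⟨fun k => if N ≤ k then u k else (B (N - k)).1, fun k hk => by simp [hk], ?_⟩
  intro k
  dsimp only
  by_cases hk : k + 1 ≤ N
  · -- backward region
    obtain ⟨j, hj⟩ : ∃ j, N - k = j + 1 := ⟨N - k - 1, by omega⟩
    have hNj : N - j = k + 1 := by omega
    have hAk : (if N ≤ k then u k else (B (N - k)).1) =
        (-(g (k + 1) * (B j).1 + h (k + 1) * (B j).2)) / f (k + 1) := by
      rw [if_neg (by omega), hj, hB, backExt_succ, hNj]
    have hAk1 : (if N ≤ k + 1 then u (k + 1) else (B (N - (k + 1))).1) = (B j).1 := by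
      by_cases hk1 : k + 1 = N
      · rw [if_pos (by omega)]
        have hj0 : j = 0 := by omega
        rw [hj0, hB, backExt_zero, hk1]
      · rw [if_neg (by omega)]
        have : N - (k + 1) = j := by omega
        rw [this]
    have hAk2 : (if N ≤ k + 2 then u (k + 2) else (B (N - (k + 2))).1) = (B j).2 := by
      by_cases hk2 : N ≤ k + 2
      · rw [if_pos hk2]
        by_cases hk2' : N = k + 1
        · have hj0 : j = 0 := by omega
          rw [hj0, hB, backExt_zero]
          dsimp only
          rw [hk2']
        · have hj1 : j = 1 := by omega
          have hN : N = k + 2 := by omega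
          rw [hj1, hB, backExt_succ, backExt_zero]
          dsimp only
          rw [hN]
      · rw [if_neg hk2]
        obtain ⟨m, hm⟩ : ∃ m, j = m + 1 := ⟨j - 1, by omega⟩
        have hm' : N - (k + 2) = m := by omega
        rw [hm', hm, hB, backExt_succ]
    have hmain : (if N ≤ k then u k else (B (N - k)).1) * f (k + 1) =
        -(g (k + 1) * (B j).1 + h (k + 1) * (B j).2) := by
      rw [hAk]; exact div_mul_cancel₀ _ (hf _)
    rw [hAk1, hAk2]
    linear_combination hmain
  · -- forward region: use fixed point equation at k+1
    have hk' : N + 1 ≤ k + 1 := by omega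
    have he := hu (k + 1) hk'
    simp only [Nat.add_sub_cancel] at he
    have hg : g (k + 1) ≠ 0 := hgN _ hk'
    rw [if_pos (by omega : N ≤ k), if_pos (by omega : N ≤ k + 1), if_pos (by omega : N ≤ k + 2)]
    have he2 : u (k + 1) = (-(f (k + 1) * u k) - h (k + 1) * u (k + 2)) / g (k + 1) := by
      rw [he]
      field_simp
    rw [eq_div_iff hg] at he2
    linear_combination he2

private lemma decay_lemma (f g h u : ℕ → ℂ) (N : ℕ) (M q : ℝ) (hM : ∀ k, ‖u k‖ ≤ M)
    (hu : ∀ k, N + 1 ≤ k → u k = -(f k / g k) * u (k - 1) - (h k / g k) * u (k + 1))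
    (K : ℕ) (hK : N + 1 ≤ K) (hq : 0 < q)
    (hb : ∀ k, K ≤ k → ‖f k / g k‖ ≤ q / 2 ∧ ‖h k / g k‖ ≤ q / 2) :
    ∀ n j, K + n ≤ j → ‖u j‖ ≤ M * q ^ n := by
  have hM0 : 0 ≤ M := le_trans (norm_nonneg _) (hM 0)
  intro n
  induction n with
  | zero => intro j _; simpa using hM j
  | succ n ih =>
    intro j hj
    have hjK : K ≤ j := by omega
    have hjN : N + 1 ≤ j := by omega
    obtain ⟨b1, b2⟩ := hb j hjK
    have e := hu j hjN
    have i1 : ‖u (j - 1)‖ ≤ M * q ^ n := ih (j - 1) (by omega)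
    have i2 : ‖u (j + 1)‖ ≤ M * q ^ n := ih (j + 1) (by omega)
    calc ‖u j‖ = ‖-(f j / g j) * u (j - 1) - (h j / g j) * u (j + 1)‖ := by rw [e]
      _ ≤ ‖-(f j / g j) * u (j - 1)‖ + ‖(h j / g j) * u (j + 1)‖ := norm_sub_le _ _
      _ ≤ (q / 2) * (M * q ^ n) + (q / 2) * (M * q ^ n) := by
          rw [norm_mul, norm_mul, norm_neg]
          gcongr
      _ = M * q ^ (n + 1) := by ring

private lemma rec_ext (f g h : ℕ → ℂ) (hh : ∀ k, h k ≠ 0) (x y : ℕ → ℂ)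
    (hx : ∀ k : ℕ, f (k + 1) * x k + g (k + 1) * x (k + 1) + h (k + 1) * x (k + 2) = 0)
    (hy : ∀ k : ℕ, f (k + 1) * y k + g (k + 1) * y (k + 1) + h (k + 1) * y (k + 2) = 0)
    (h0 : x 0 = y 0) (h1 : x 1 = y 1) : ∀ k, x k = y k := by
  have key : ∀ k, x k = y k ∧ x (k + 1) = y (k + 1) := by
    intro k
    induction k with
    | zero => exact ⟨h0, h1⟩
    | succ k ih =>
      obtain ⟨e1, e2⟩ := ih
      refine ⟨e2, ?_⟩
      have hc : h (k + 1) * x (k + 2) = h (k + 1) * y (k + 2) := by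
        linear_combination hx k - hy k - f (k + 1) * e1 - g (k + 1) * e2
      exact mul_left_cancel₀ (hh (k + 1)) hc
  exact fun k => (key k).1

private lemma growth_lemma (f g h e : ℕ → ℂ) (N : ℕ) (R : ℝ)
    (hrec : ∀ k : ℕ, f (k + 1) * e k + g (k + 1) * e (k + 1) + h (k + 1) * e (k + 2) = 0)
    (hR : 1 ≤ R)
    (hb : ∀ k, N ≤ k → ‖f (k + 1)‖ ≤ ‖g (k + 1)‖ / (2 * R) ∧ ‖h (k + 1)‖ ≤ ‖g (k + 1)‖ / (2 * R))
    (hf : ∀ k, f k ≠ 0) (hhn : ∀ k, h k ≠ 0)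
    (he0 : e N = 0) (he1 : e (N + 1) = 1) :
    ∀ n, R ^ n ≤ ‖e (N + 1 + n)‖ := by
  have hR0 : 0 < R := lt_of_lt_of_le one_pos hR
  have key : ∀ n, ‖e (N + n)‖ ≤ ‖e (N + 1 + n)‖ ∧ R ^ n ≤ ‖e (N + 1 + n)‖ := by
    intro n
    induction n with
    | zero => simp [he0, he1]
    | succ n ih =>
      obtain ⟨ih1, ih2⟩ := ih
      set k := N + n with hk
      have hFb := (hb k (by omega)).1
      have hHb := (hb k (by omega)).2
      set F := ‖f (k + 1)‖
      set G := ‖g (k + 1)‖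
      set H := ‖h (k + 1)‖
      have hF0 : 0 < F := norm_pos_iff.mpr (hf (k + 1))
      have hR2 : (0:ℝ) < 2 * R := by linarith
      have hGnn : (0:ℝ) ≤ G := norm_nonneg _
      have hG0 : 0 < G := by
        rcases eq_or_lt_of_le hGnn with heq | hgt
        · exfalso
          rw [← heq, zero_div] at hFb
          linarith
        · exact hgt
      have hH0 : 0 < H := norm_pos_iff.mpr (hhn (k + 1))
      have hFb' : F * (2 * R) ≤ G := (le_div_iff₀ hR2).mp hFb
      have hHb' : H * (2 * R) ≤ G := (le_div_iff₀ hR2).mp hHb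
      have hrw : h (k + 1) * e (k + 2) = -(g (k + 1) * e (k + 1) + f (k + 1) * e k) := by
        linear_combination hrec k
      have hnorm : H * ‖e (k + 2)‖ = ‖g (k + 1) * e (k + 1) + f (k + 1) * e k‖ := by
        rw [← norm_mul, hrw, norm_neg]
      have htri : G * ‖e (k + 1)‖ ≤ ‖g (k + 1) * e (k + 1) + f (k + 1) * e k‖ + F * ‖e k‖ := by
        calc G * ‖e (k + 1)‖ = ‖g (k + 1) * e (k + 1)‖ := (norm_mul _ _).symm
          _ = ‖(g (k + 1) * e (k + 1) + f (k + 1) * e k) - f (k + 1) * e k‖ := by ring_nf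
          _ ≤ ‖g (k + 1) * e (k + 1) + f (k + 1) * e k‖ + ‖f (k + 1) * e k‖ := norm_sub_le _ _
          _ = ‖g (k + 1) * e (k + 1) + f (k + 1) * e k‖ + F * ‖e k‖ := by rw [norm_mul]
      -- now pure real arithmetic
      have hEk : ‖e (N + n)‖ = ‖e k‖ := rfl
      have hEk1 : ‖e (N + 1 + n)‖ = ‖e (k + 1)‖ := by rw [hk]; ring_nf
      rw [hEk] at ih1; rw [hEk1] at ih1 ih2
      have hy0 : (0:ℝ) ≤ ‖e (k + 1)‖ := norm_nonneg _
      have hmain : R * ‖e (k + 1)‖ ≤ ‖e (k + 2)‖ := by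
        set x := ‖e k‖
        set y := ‖e (k + 1)‖
        set z2 := ‖e (k + 2)‖
        have hx0 : (0:ℝ) ≤ x := norm_nonneg _
        have hz0 : (0:ℝ) ≤ z2 := norm_nonneg _
        have s1 : G * y - F * x ≤ H * z2 := by linarith
        have s2 : F * x ≤ F * y := mul_le_mul_of_nonneg_left ih1 (le_of_lt hF0)
        have s3 : (F * y) * (2 * R) ≤ G * y := by nlinarith
        have s4 : (H * z2) * (2 * R) ≤ G * z2 := by nlinarith
        have s5 : R * (G * y) ≤ G * z2 := by
          nlinarith [mul_le_mul_of_nonneg_right s1 hR2.le, mul_le_mul_of_nonneg_right s2 hR2.le,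
            mul_nonneg (mul_nonneg (sub_nonneg.mpr hR) hGnn) hy0, s3, s4]
        have := (mul_le_mul_iff_right₀ hG0).mp (by linarith : G * (R * y) ≤ G * z2)
        linarith
      constructor
      · have : ‖e (N + (n + 1))‖ = ‖e (k + 1)‖ := by rw [hk]; ring_nf
        rw [this]
        have : ‖e (N + 1 + (n + 1))‖ = ‖e (k + 2)‖ := by rw [hk]; ring_nf
        rw [this]
        nlinarith
      · have : ‖e (N + 1 + (n + 1))‖ = ‖e (k + 2)‖ := by rw [hk]; ring_nf
        rw [this]
        calc R ^ (n + 1) = R * R ^ n := by ring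
          _ ≤ R * ‖e (k + 1)‖ := by nlinarith
          _ ≤ ‖e (k + 2)‖ := hmain
  exact fun n => (key n).2

/-- Existence and uniqueness (up to a constant factor) of an everywhere-converging power
series solution of a three-term recurrence `f k * a (k-1) + g k * a k + h k * a (k+1) = 0`
(for `k ≥ 1`) with `f k, h k ≠ 0` and `f k = o(g k)`, `h k = o(g k)` as `k → ∞`. -/
theorem three_term_recurrence_converging_solution
    (f g h : ℕ → ℂ)
    (hf : ∀ k, f k ≠ 0) (hh : ∀ k, h k ≠ 0)
    (hg : ∃ N : ℕ, ∀ k ≥ N, g k ≠ 0)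
    (hfg : Tendsto (fun k => f k / g k) atTop (nhds 0))
    (hhg : Tendsto (fun k => h k / g k) atTop (nhds 0)) :
    ∃ a : ℕ → ℂ, a ≠ 0 ∧
      (∀ k : ℕ, f (k + 1) * a k + g (k + 1) * a (k + 1) + h (k + 1) * a (k + 2) = 0) ∧
      (∀ z : ℂ, Summable fun k => a k * z ^ k) ∧
      ∀ a' : ℕ → ℂ,
        (∀ k : ℕ, f (k + 1) * a' k + g (k + 1) * a' (k + 1) + h (k + 1) * a' (k + 2) = 0) →
        (∃ z : ℂ, z ≠ 0 ∧ Summable fun k => a' k * z ^ k) →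
        ∃ c : ℂ, ∀ k, a' k = c * a k := by
  obtain ⟨Ng, hNg⟩ := hg
  -- smallness extraction
  have key : ∀ ε : ℝ, 0 < ε → ∃ K, ∀ k, K ≤ k → ‖f k / g k‖ ≤ ε ∧ ‖h k / g k‖ ≤ ε := by
    intro ε hε
    have h1 := (hfg.eventually (Metric.ball_mem_nhds (0 : ℂ) hε)).and
      (hhg.eventually (Metric.ball_mem_nhds (0 : ℂ) hε))
    rw [eventually_atTop] at h1
    obtain ⟨K, hK⟩ := h1
    refine ⟨K, fun k hk => ⟨?_, ?_⟩⟩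
    · have := (hK k hk).1
      simp only [Metric.mem_ball, dist_zero_right] at this
      exact this.le
    · have := (hK k hk).2
      simp only [Metric.mem_ball, dist_zero_right] at this
      exact this.le
  -- norm version of smallness (with g ≠ 0)
  have key' : ∀ ε : ℝ, 0 < ε → ∃ K, Ng ≤ K ∧ ∀ k, K ≤ k → g k ≠ 0 ∧
      ‖f k‖ ≤ ε * ‖g k‖ ∧ ‖h k‖ ≤ ε * ‖g k‖ := by
    intro ε hε
    obtain ⟨K₀, hK₀⟩ := key ε hε
    refine ⟨max K₀ Ng, le_max_right _ _, fun k hk => ?_⟩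
    have hgk : g k ≠ 0 := hNg k (le_trans (le_max_right _ _) hk)
    obtain ⟨b1, b2⟩ := hK₀ k (le_trans (le_max_left _ _) hk)
    have e1 : ‖f k‖ = ‖f k / g k‖ * ‖g k‖ := by
      rw [← norm_mul, div_mul_cancel₀ _ hgk]
    have e2 : ‖h k‖ = ‖h k / g k‖ * ‖g k‖ := by
      rw [← norm_mul, div_mul_cancel₀ _ hgk]
    have hgn : (0:ℝ) ≤ ‖g k‖ := norm_nonneg _
    exact ⟨hgk, by rw [e1]; exact mul_le_mul_of_nonneg_right b1 hgn,
      by rw [e2]; exact mul_le_mul_of_nonneg_right b2 hgn⟩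
  -- construct the solution
  obtain ⟨N₀, hN₀⟩ := key 8⁻¹ (by norm_num)
  set N := max N₀ Ng with hN
  have hbN : ∀ k, N + 1 ≤ k → ‖f k / g k‖ ≤ 8⁻¹ ∧ ‖h k / g k‖ ≤ 8⁻¹ :=
    fun k hk => hN₀ k (by omega)
  obtain ⟨u, M, huN, hM, hu⟩ := exists_tail_solution f g h N hbN
  have hgN : ∀ k, N + 1 ≤ k → g k ≠ 0 := fun k hk => hNg k (by omega)
  obtain ⟨A, hAu, hArec⟩ := full_solution f g h N u hf hgN hu
  have hAN : A N = 1 := by rw [hAu N le_rfl, huN]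
  -- global bound for A
  have hM0 : 0 ≤ M := le_trans (norm_nonneg _) (hM 0)
  obtain ⟨Ca, hCa0, hCa⟩ : ∃ Ca : ℝ, 0 ≤ Ca ∧ ∀ k, ‖A k‖ ≤ Ca := by
    set C₁ := (Finset.range (N + 1)).sup' ⟨0, by simp⟩ (fun k => ‖A k‖) with hC₁
    refine ⟨max M C₁, le_trans hM0 (le_max_left _ _), fun k => ?_⟩
    by_cases hk : N ≤ k
    · rw [hAu k hk]
      exact le_trans (hM k) (le_max_left _ _)
    · refine le_trans ?_ (le_max_right _ _)
      exact Finset.le_sup' (fun k => ‖A k‖) (Finset.mem_range.mpr (by omega))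
  -- summability of A against any z
  have hAsum : ∀ z : ℂ, Summable fun k => A k * z ^ k := by
    intro z
    set q : ℝ := (2 * (‖z‖ + 1))⁻¹ with hq
    have hz1 : (0:ℝ) < ‖z‖ + 1 := by positivity
    have hq0 : 0 < q := by positivity
    obtain ⟨K₀, hK₀⟩ := key (q / 2) (by positivity)
    set K := max K₀ (N + 1) with hK
    have hdec := decay_lemma f g h u N M q hM hu K (le_max_right _ _) hq0
      (fun k hk => hK₀ k (le_trans (le_max_left _ _) hk))
    rw [← summable_nat_add_iff K]
    have hqz : q * ‖z‖ ≤ 2⁻¹ := by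
      rw [hq]
      rw [inv_mul_le_iff₀ (by positivity)]
      have : (0:ℝ) ≤ ‖z‖ := norm_nonneg _
      nlinarith
    apply Summable.of_norm_bounded (g := fun n => (M * ‖z‖ ^ K) * 2⁻¹ ^ n)
    · exact (summable_geometric_of_lt_one (by norm_num) (by norm_num)).mul_left _
    · intro n
      have hdn : ‖u (n + K)‖ ≤ M * q ^ n := hdec n (n + K) (by omega)
      have hAn : A (n + K) = u (n + K) := hAu _ (by omega)
      calc ‖A (n + K) * z ^ (n + K)‖ = ‖u (n + K)‖ * ‖z‖ ^ (n + K) := by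
            rw [hAn, norm_mul, norm_pow]
        _ ≤ (M * q ^ n) * ‖z‖ ^ (n + K) := by
            apply mul_le_mul_of_nonneg_right hdn (by positivity)
        _ = (M * ‖z‖ ^ K) * (q * ‖z‖) ^ n := by
            rw [pow_add, mul_pow]; ring
        _ ≤ (M * ‖z‖ ^ K) * 2⁻¹ ^ n := by
            apply mul_le_mul_of_nonneg_left _ (by positivity)
            exact pow_le_pow_left₀ (by positivity) hqz n
  refine ⟨A, ?_, hArec, hAsum, ?_⟩
  · intro hA0
    have := congrFun hA0 N
    rw [hAN] at this
    simp at this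
  -- uniqueness
  intro a' hrec' ⟨z, hz, hsum'⟩
  -- geometric bound for a'
  have htend : Tendsto (fun k => ‖a' k * z ^ k‖) atTop (nhds 0) := by
    have := hsum'.tendsto_atTop_zero.norm
    simpa using this
  obtain ⟨C', hC'⟩ := htend.bddAbove_range
  simp only [upperBounds, Set.mem_range, Set.mem_setOf_eq] at hC'
  have hC'b : ∀ k, ‖a' k * z ^ k‖ ≤ C' := fun k => hC' ⟨k, rfl⟩
  have hC'0 : 0 ≤ C' := le_trans (norm_nonneg _) (hC'b 0)
  set r : ℝ := max 1 ‖z‖⁻¹ with hr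
  have hr1 : (1:ℝ) ≤ r := le_max_left _ _
  have hr0 : (0:ℝ) < r := by linarith
  have ha'bd : ∀ k, ‖a' k‖ ≤ C' * r ^ k := by
    intro k
    have hzk : (0:ℝ) < ‖z‖ ^ k := by
      apply pow_pos
      simpa [norm_pos_iff] using hz
    have e1 : ‖a' k‖ * ‖z‖ ^ k ≤ C' := by
      rw [← norm_pow, ← norm_mul]; exact hC'b k
    have e2 : ‖a' k‖ ≤ C' * (‖z‖⁻¹) ^ k := by
      rw [inv_pow]
      calc ‖a' k‖ = (‖a' k‖ * ‖z‖ ^ k) * (‖z‖ ^ k)⁻¹ :=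
            (mul_inv_cancel_right₀ (ne_of_gt hzk) _).symm
        _ ≤ C' * (‖z‖ ^ k)⁻¹ := mul_le_mul_of_nonneg_right e1 (by positivity)
    refine le_trans e2 ?_
    apply mul_le_mul_of_nonneg_left _ hC'0
    exact pow_le_pow_left₀ (by positivity) (le_max_right _ _) k
  by_cases hdep : ∃ c : ℂ, a' 0 = c * A 0 ∧ a' 1 = c * A 1
  · obtain ⟨c, hc0, hc1⟩ := hdep
    refine ⟨c, rec_ext f g h hh a' (fun k => c * A k) hrec' ?_ hc0 hc1⟩
    intro k
    linear_combination c * hArec k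
  · exfalso
    -- A 0, A 1 not both zero
    have hA01 : ¬(A 0 = 0 ∧ A 1 = 0) := by
      rintro ⟨h0, h1⟩
      have := rec_ext f g h hh A (fun _ => 0) hArec (by intro k; ring) (by simpa using h0)
        (by simpa using h1)
      have := this N
      rw [hAN] at this
      simp at this
    -- Wronskian
    set W : ℕ → ℂ := fun k => A k * a' (k + 1) - A (k + 1) * a' k with hW
    have hW0 : W 0 ≠ 0 := by
      intro hw0
      apply hdep
      by_cases hA0 : A 0 = 0
      · have hA1 : A 1 ≠ 0 := fun hA1 => hA01 ⟨hA0, hA1⟩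
        have ha'0 : a' 0 = 0 := by
          have hthis : A 0 * a' 1 - A 1 * a' 0 = 0 := hw0
          have h2 : A 1 * a' 0 = 0 := by linear_combination -hthis + a' 1 * hA0
          rcases mul_eq_zero.mp h2 with hc | hc
          · exact absurd hc hA1
          · exact hc
        exact ⟨a' 1 / A 1, by rw [ha'0, hA0, mul_zero],
          (div_mul_cancel₀ _ hA1).symm⟩
      · refine ⟨a' 0 / A 0, (div_mul_cancel₀ _ hA0).symm, ?_⟩
        have hthis : A 0 * a' 1 - A 1 * a' 0 = 0 := hw0
        rw [div_mul_eq_mul_div, eq_div_iff hA0]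
        linear_combination hthis
    have hWstep : ∀ k, h (k + 1) * W (k + 1) = f (k + 1) * W k := by
      intro k
      simp only [hW]
      linear_combination A (k + 1) * hrec' k - a' (k + 1) * hArec k
    have hWk : ∀ k, W k ≠ 0 := by
      intro k
      induction k with
      | zero => exact hW0
      | succ k ih =>
        intro hw
        have := hWstep k
        rw [hw, mul_zero] at this
        exact ih (by
          rcases mul_eq_zero.mp this.symm with hc | hc
          · exact absurd hc (hf (k + 1))
          · exact hc)
    -- growth setup
    set R : ℝ := 4 * r + 4 with hR
    have hR1 : (1:ℝ) ≤ R := by linarith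
    have hR0 : (0:ℝ) < 2 * R := by linarith
    obtain ⟨N₃, hN₃Ng, hN₃⟩ := key' (2 * R)⁻¹ (by positivity)
    have hbound : ∀ k, N₃ ≤ k → ‖f (k + 1)‖ ≤ ‖g (k + 1)‖ / (2 * R) ∧
        ‖h (k + 1)‖ ≤ ‖g (k + 1)‖ / (2 * R) := by
      intro k hk
      obtain ⟨-, b1, b2⟩ := hN₃ (k + 1) (by omega)
      constructor
      · rw [div_eq_inv_mul]; exact b1
      · rw [div_eq_inv_mul]; exact b2
    set α : ℂ := -a' N₃ / W N₃ with hα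
    set β : ℂ := A N₃ / W N₃ with hβ
    set e : ℕ → ℂ := fun k => α * A k + β * a' k with he
    have he0 : e N₃ = 0 := by
      simp only [he, hα, hβ]
      rw [div_mul_eq_mul_div, div_mul_eq_mul_div, ← add_div, div_eq_zero_iff]
      left
      ring
    have he1 : e (N₃ + 1) = 1 := by
      simp only [he, hα, hβ]
      rw [div_mul_eq_mul_div, div_mul_eq_mul_div, ← add_div, div_eq_one_iff_eq (hWk N₃)]
      simp only [hW]
      ring
    have herec : ∀ k : ℕ, f (k + 1) * e k + g (k + 1) * e (k + 1) + h (k + 1) * e (k + 2) = 0 := by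
      intro k
      simp only [he]
      linear_combination α * hArec k + β * hrec' k
    have hgrow := growth_lemma f g h e N₃ R herec hR1 hbound hf hh he0 he1
    -- upper bound for e
    set D : ℝ := ‖α‖ * Ca + ‖β‖ * C' with hD
    have heub : ∀ k, ‖e k‖ ≤ D * r ^ k := by
      intro k
      have hrk : (1:ℝ) ≤ r ^ k := one_le_pow₀ hr1
      calc ‖e k‖ ≤ ‖α * A k‖ + ‖β * a' k‖ := norm_add_le _ _
        _ = ‖α‖ * ‖A k‖ + ‖β‖ * ‖a' k‖ := by rw [norm_mul, norm_mul]
        _ ≤ ‖α‖ * Ca + ‖β‖ * (C' * r ^ k) := by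
            gcongr
            · exact hCa k
            · exact ha'bd k
        _ ≤ D * r ^ k := by
            rw [hD]
            have h1 : ‖α‖ * Ca ≤ (‖α‖ * Ca) * r ^ k := le_mul_of_one_le_right (by positivity) hrk
            nlinarith [norm_nonneg β, hC'0]
    -- contradiction
    set E : ℝ := D * r ^ (N₃ + 1) with hE
    obtain ⟨n, hn⟩ := pow_unbounded_of_one_lt E (by norm_num : (1:ℝ) < 4)
    have h1 : R ^ n ≤ ‖e (N₃ + 1 + n)‖ := hgrow n
    have h2 : ‖e (N₃ + 1 + n)‖ ≤ D * r ^ (N₃ + 1 + n) := heub _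
    have h3 : (4 * r) ^ n ≤ R ^ n := by
      apply pow_le_pow_left₀ (by positivity)
      linarith
    have h4 : D * r ^ (N₃ + 1 + n) = E * r ^ n := by
      rw [hE, pow_add]; ring
    have h5 : (4:ℝ) ^ n * r ^ n ≤ E * r ^ n := by
      calc (4:ℝ) ^ n * r ^ n = (4 * r) ^ n := by rw [mul_pow]
        _ ≤ R ^ n := h3
        _ ≤ D * r ^ (N₃ + 1 + n) := le_trans h1 h2
        _ = E * r ^ n := h4
    have h6 : (4:ℝ) ^ n ≤ E := by
      have hrn : (0:ℝ) < r ^ n := by positivity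
      exact le_of_mul_le_mul_right h5 hrn
    linarith
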